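/- arXiv:1610.06814 — 3 statements merged into one kernel-verified Lean document; each statement's English description precedes it below -/
import Mathlib

section
/- Let u_0 ∈ ℝ, f ∈ L²(0,T), and let 0 = t_0 < t_1 < ⋯ < t_N = T with τ_n = t_n − t_{n−1}. Define U_0 = u_0 and, for n = 1, …, N, f_n = (1/τ_n)∫_{t_{n−1}}^{t_n} f dt and U_n = (U_{n−1} + τ_n f_n)/(1 + τ_n) (implicit Euler for ∂_t u + u = f). Then ∑_{n=1}^N |U_n − U_{n−1}|² ≤ ∫_0^T |f|² dt + |u_0|². -/
open MeasureTheory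

/-- Pure algebra: one implicit Euler step. -/
lemma step_alg (τ a F : ℝ) (hτ : 0 < τ) :
    ((a + τ * F) / (1 + τ) - a) ^ 2 + ((a + τ * F) / (1 + τ)) ^ 2 ≤ a ^ 2 + τ * F ^ 2 := by
  have h1 : (0:ℝ) < 1 + τ := by linarith
  rw [div_sub' h1.ne', div_pow, div_pow, ← add_div, div_le_iff₀ (by positivity)]
  nlinarith [sq_nonneg (a + τ * F), sq_nonneg (a - F), sq_nonneg ((a + τ*F - a*(1+τ)) - (a+τ*F))]

/-- Cauchy–Schwarz via nonnegativity of ∫ (f - mean)². -/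
lemma mean_sq_le (a b : ℝ) (hab : a < b) (f : ℝ → ℝ)
    (h1 : IntervalIntegrable f volume a b)
    (h2 : IntervalIntegrable (fun s => f s ^ 2) volume a b) :
    (b - a) * ((1 / (b - a)) * ∫ s in a..b, f s) ^ 2 ≤ ∫ s in a..b, f s ^ 2 := by
  set τ := b - a with hτdef
  have hτ : 0 < τ := by simp [hτdef]; linarith
  set I := ∫ s in a..b, f s with hI
  set c := I / τ with hc
  have hconst : IntervalIntegrable (fun _ : ℝ => c ^ 2 - 2 * c * 0) volume a b := by
    simpa using (intervalIntegrable_const (c := c ^ 2) (μ := volume) (a := a) (b := b))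
  have hexp : (∫ s in a..b, (f s - c) ^ 2)
      = (∫ s in a..b, f s ^ 2) - 2 * c * I + c ^ 2 * τ := by
    have : ∀ s, (f s - c) ^ 2 = f s ^ 2 - (2 * c) * f s + c ^ 2 := by intro s; ring
    simp_rw [this]
    rw [intervalIntegral.integral_add (h2.sub (h1.const_mul (2*c))) intervalIntegrable_const,
        intervalIntegral.integral_sub h2 (h1.const_mul (2*c)),
        intervalIntegral.integral_const_mul, intervalIntegral.integral_const]
    simp [hI, hτdef, smul_eq_mul, mul_comm]
  have hnn : 0 ≤ ∫ s in a..b, (f s - c) ^ 2 :=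
    intervalIntegral.integral_nonneg hab.le (fun s _ => sq_nonneg _)
  have key : 2 * c * I - c ^ 2 * τ ≤ ∫ s in a..b, f s ^ 2 := by linarith [hexp ▸ hnn]
  have h3 : τ * ((1 / τ) * I) ^ 2 = 2 * c * I - c ^ 2 * τ := by
    rw [hc]
    field_simp
    ring
  linarith [h3 ▸ key]

/-- Uniform energy estimate for the implicit Euler (dG(0)) discretisation of
`∂ₜ u + u = f`, `u(0) = u₀`, with `fₙ` the mean value of `f` on the n-th interval. -/
theorem stmt1 (T : ℝ) (hT : 0 < T) (N : ℕ) (hN : 0 < N)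
    (t : ℕ → ℝ) (ht0 : t 0 = 0) (htN : t N = T)
    (hmono : ∀ n < N, t n < t (n + 1))
    (f : ℝ → ℝ)
    (hf : IntervalIntegrable f volume 0 T)
    (hf2 : IntervalIntegrable (fun s => (f s) ^ 2) volume 0 T)
    (u0 : ℝ) (U : ℕ → ℝ) (hU0 : U 0 = u0)
    (hU : ∀ n < N,
      U (n + 1) =
        (U n + (t (n + 1) - t n) *
          ((1 / (t (n + 1) - t n)) * ∫ s in (t n)..(t (n + 1)), f s)) /
          (1 + (t (n + 1) - t n))) :
    ∑ n ∈ Finset.range N, (U (n + 1) - U n) ^ 2 ≤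
      (∫ s in (0:ℝ)..T, (f s) ^ 2) + u0 ^ 2 := by
  -- monotone values of t up to N
  have hle : ∀ i j, i ≤ j → j ≤ N → t i ≤ t j := by
    intro i j hij hjN
    induction j with
    | zero => simp_all
    | succ k ih =>
      rcases Nat.lt_succ_iff_lt_or_eq.mp (Nat.lt_succ_of_le hij) with h | h
      · exact le_trans (ih (Nat.lt_succ_iff.mp h)
          (Nat.le_of_succ_le hjN)) (le_of_lt (hmono k (Nat.lt_of_succ_le hjN)))
      · subst h; rfl
  have hsub : ∀ n < N, Set.uIcc (t n) (t (n + 1)) ⊆ Set.uIcc (0:ℝ) T := by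
    intro n hn
    have h0n : (0:ℝ) ≤ t n := ht0 ▸ hle 0 n (Nat.zero_le _) hn.le
    have h0n1 : (0:ℝ) ≤ t (n+1) := ht0 ▸ hle 0 (n+1) (Nat.zero_le _) hn
    have hnT : t n ≤ T := htN ▸ hle n N hn.le le_rfl
    have hn1T : t (n+1) ≤ T := htN ▸ hle (n+1) N hn le_rfl
    exact Set.uIcc_subset_uIcc (Set.mem_uIcc.mpr (Or.inl ⟨h0n, hnT⟩))
      (Set.mem_uIcc.mpr (Or.inl ⟨h0n1, hn1T⟩))
  have hint1 : ∀ n < N, IntervalIntegrable f volume (t n) (t (n+1)) :=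
    fun n hn => hf.mono_set (hsub n hn)
  have hint2 : ∀ n < N, IntervalIntegrable (fun s => f s ^ 2) volume (t n) (t (n+1)) :=
    fun n hn => hf2.mono_set (hsub n hn)
  -- per-step estimate
  have key : ∀ n < N, (U (n+1) - U n) ^ 2 ≤
      (U n ^ 2 - U (n+1) ^ 2) + ∫ s in (t n)..(t (n+1)), f s ^ 2 := by
    intro n hn
    have hτ : 0 < t (n+1) - t n := sub_pos.mpr (hmono n hn)
    set τ := t (n+1) - t n
    set F := (1 / τ) * ∫ s in (t n)..(t (n+1)), f s with hF
    have halg := step_alg τ (U n) F hτ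
    have hU' := hU n hn
    rw [← hU'] at halg
    have hcs : τ * F ^ 2 ≤ ∫ s in (t n)..(t (n+1)), f s ^ 2 :=
      mean_sq_le (t n) (t (n+1)) (hmono n hn) f (hint1 n hn) (hint2 n hn)
    linarith
  calc ∑ n ∈ Finset.range N, (U (n + 1) - U n) ^ 2
      ≤ ∑ n ∈ Finset.range N,
          ((U n ^ 2 - U (n+1) ^ 2) + ∫ s in (t n)..(t (n+1)), f s ^ 2) :=
        Finset.sum_le_sum (fun n hn => key n (Finset.mem_range.mp hn))
    _ = (U 0 ^ 2 - U N ^ 2) + ∫ s in (t 0)..(t N), f s ^ 2 := by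
        rw [Finset.sum_add_distrib, Finset.sum_range_sub' (fun n => U n ^ 2),
          intervalIntegral.sum_integral_adjacent_intervals hint2]
    _ ≤ (∫ s in (0:ℝ)..T, (f s) ^ 2) + u0 ^ 2 := by
        rw [ht0, htN, hU0]
        nlinarith [sq_nonneg (U N)]
end

section
/- Let H be a real Hilbert space, V ⊆ H a closed subspace with orthogonal projection Π : H → V, and ‖·‖_E an equivalent Hilbert norm on H induced by a continuous symmetric coercive bilinear form B. Let u⁻ ∈ H, τ > 0, f̄ ∈ H, and suppose U ∈ V satisfies (1/τ)⟨U − u⁻, V⟩_H + B(U, V) = ⟨f̄, V⟩_H for all V ∈ V (backward Euler step). Then (1/τ)‖U − Π u⁻‖_H² + ‖U‖_E² − ‖Π u⁻‖_E² + ‖U − Π u⁻‖_E² · 0 ≤ τ‖f̄‖_H², and more precisely ‖Π(U − u⁻)/τ‖_H²·τ + ‖U − Π u⁻‖_E² + ‖U‖_E² − ‖Π u⁻‖_E² ≤ τ‖f̄‖_H². -/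
open MeasureTheory
open scoped RealInnerProductSpace

/-- Energy estimate for a single backward Euler step (s = 0 case of the uniform
global energy estimate). -/
theorem stmt6 {H : Type*} [NormedAddCommGroup H] [InnerProductSpace ℝ H]
    [CompleteSpace H] (V : Submodule ℝ H) [CompleteSpace V]
    (B : H →ₗ[ℝ] H →ₗ[ℝ] ℝ)
    (hsymm : ∀ x y, B x y = B y x)
    (hcont : ∃ C : ℝ, ∀ x y, |B x y| ≤ C * ‖x‖ * ‖y‖)
    (hcoer : ∃ c : ℝ, 0 < c ∧ ∀ x, c * ‖x‖ ^ 2 ≤ B x x)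
    (um : H) (τ : ℝ) (hτ : 0 < τ) (fbar : H)
    (U : H) (hU : U ∈ V)
    (heq : ∀ W ∈ V, (1 / τ) * ⟪U - um, W⟫ + B U W = ⟪fbar, W⟫) :
    (1 / τ) * ‖U - (V.orthogonalProjectionOnto um : H)‖ ^ 2
        + B U U
        - B ((V.orthogonalProjectionOnto um : H)) ((V.orthogonalProjectionOnto um : H))
      ≤ τ * ‖fbar‖ ^ 2 ∧
    τ * ‖(1 / τ) • ((V.orthogonalProjectionOnto (U - um) : H))‖ ^ 2
        + B (U - (V.orthogonalProjectionOnto um : H)) (U - (V.orthogonalProjectionOnto um : H))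
        + B U U
        - B ((V.orthogonalProjectionOnto um : H)) ((V.orthogonalProjectionOnto um : H))
      ≤ τ * ‖fbar‖ ^ 2 := by
  set p : H := (V.orthogonalProjectionOnto um : H) with hp
  set W : H := U - p with hWdef
  have hpV : p ∈ V := (V.orthogonalProjectionOnto um).2
  have hW : W ∈ V := V.sub_mem hU hpV
  have h1 := heq W hW
  -- orthogonality : ⟪U - um, W⟫ = ‖W‖²
  have horth : ⟪um - p, W⟫ = 0 := by
    have hmem : um - p ∈ Vᗮ := V.sub_starProjection_mem_orthogonal um
    rw [real_inner_comm]
    exact (Submodule.mem_orthogonal V (um - p)).1 hmem W hW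
  have hip : ⟪U - um, W⟫ = ‖W‖ ^ 2 := by
    have hd : U - um = W - (um - p) := by rw [hWdef]; abel
    rw [hd, inner_sub_left, horth, real_inner_self_eq_norm_sq]
    ring
  -- bilinear expansions
  have hBW : B U W = B U U - B U p := by simp [hWdef]
  have hBWW : (B W) W = B U U - 2 * B U p + B p p := by
    simp [hWdef, hsymm p U]; ring
  -- Cauchy–Schwarz
  have hcs : ⟪fbar, W⟫ ≤ ‖fbar‖ * ‖W‖ := real_inner_le_norm fbar W
  have hτ1 : τ * (1 / τ) = 1 := mul_one_div_cancel hτ.ne'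
  -- step estimate, multiplied through by τ
  have h1' : (1 / τ) * ‖W‖ ^ 2 + (B U U - B U p) ≤ ‖fbar‖ * ‖W‖ := by
    rw [hip, hBW] at h1; linarith
  have h2 : ‖W‖ ^ 2 + τ * (B U U - B U p) ≤ τ * (‖fbar‖ * ‖W‖) := by
    have h := mul_le_mul_of_nonneg_left h1' hτ.le
    nlinarith [h, hτ1]
  -- Young
  have h3 : 2 * (τ * (‖fbar‖ * ‖W‖)) ≤ τ ^ 2 * ‖fbar‖ ^ 2 + ‖W‖ ^ 2 := by
    nlinarith [sq_nonneg (τ * ‖fbar‖ - ‖W‖)]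
  have hBeq : B W W + B U U - B p p = 2 * (B U U - B U p) := by
    rw [hBWW]; ring
  have key2 : ‖W‖ ^ 2 + τ * (B W W + B U U - B p p) ≤ τ ^ 2 * ‖fbar‖ ^ 2 := by
    have hτX : τ * (B W W + B U U - B p p) = 2 * (τ * (B U U - B U p)) := by
      rw [hBeq]; ring
    linarith
  -- divide by τ
  have key : (1 / τ) * ‖W‖ ^ 2 + (B W W + B U U - B p p) ≤ τ * ‖fbar‖ ^ 2 := by
    have h5 : ‖W‖ ^ 2 ≤ (τ * ‖fbar‖ ^ 2 - (B W W + B U U - B p p)) * τ := by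
      nlinarith [key2]
    have h6 : ‖W‖ ^ 2 / τ ≤ τ * ‖fbar‖ ^ 2 - (B W W + B U U - B p p) :=
      (div_le_iff₀ hτ).2 h5
    rw [one_div_mul_eq_div]
    linarith
  have hBWWnn : 0 ≤ B W W := by
    obtain ⟨c, hc, hco⟩ := hcoer
    nlinarith [hco W, sq_nonneg ‖W‖]
  constructor
  · linarith
  · have hPU : ((V.orthogonalProjectionOnto U : V) : H) = U :=
      V.starProjection_eq_self_iff.2 hU
    have hproj : (V.orthogonalProjectionOnto (U - um) : H) = W := by
      rw [map_sub]; push_cast; rw [hPU, hWdef, hp]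
    have hnorm : τ * ‖(1 / τ) • ((V.orthogonalProjectionOnto (U - um) : H))‖ ^ 2
        = (1 / τ) * ‖W‖ ^ 2 := by
      rw [hproj, norm_smul, Real.norm_eq_abs, abs_of_pos (by positivity : (0:ℝ) < 1 / τ)]
      field_simp
    rw [hnorm]
    linarith
end

section
/- Let T > 0 and let E : {(a,b] : 0 ≤ a < b ≤ T} → [0,∞) be superadditive (E(a,c] + E(c,b] ≤ E(a,b] for a < c < b) and monotone under inclusion. Suppose there is a partition 0 = t̃_0 < ⋯ < t̃_{N_f} = T with ∑_{m=1}^{N_f} E(t̃_{m−1}, t̃_m] ≤ TOL²/2 and a number tol² ≤ TOL²/(2N_f). Then for every partition 0 = t_0 < ⋯ < t_N = T satisfying E(t_{n−1}, t_n] ≤ tol² for all n, it holds that ∑_{n=1}^N E(t_{n−1}, t_n] ≤ TOL². -/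
/-- Abstract form of the implication (Cons:ineq) in Lemma `termination-tolfind`. -/
theorem stmt14 (T : ℝ) (hT : 0 < T)
    (E : ℝ → ℝ → ℝ)
    (hEnonneg : ∀ a b : ℝ, 0 ≤ a → a < b → b ≤ T → 0 ≤ E a b)
    (hsuper : ∀ a c b : ℝ, 0 ≤ a → a < c → c < b → b ≤ T → E a c + E c b ≤ E a b)
    (hmono : ∀ a a' b' b : ℝ, 0 ≤ a → a ≤ a' → a' < b' → b' ≤ b → b ≤ T →
      E a' b' ≤ E a b)
    (TOL tol : ℝ)
    (Nf : ℕ) (hNf : 0 < Nf) (tref : ℕ → ℝ)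
    (htref0 : tref 0 = 0) (htrefN : tref Nf = T)
    (htrefmono : ∀ m < Nf, tref m < tref (m + 1))
    (href : ∑ m ∈ Finset.range Nf, E (tref m) (tref (m + 1)) ≤ TOL ^ 2 / 2)
    (htol : tol ^ 2 ≤ TOL ^ 2 / (2 * Nf))
    (N : ℕ) (t : ℕ → ℝ) (ht0 : t 0 = 0) (htN : t N = T)
    (htmono : ∀ n < N, t n < t (n + 1))
    (hloc : ∀ n < N, E (t n) (t (n + 1)) ≤ tol ^ 2) :
    ∑ n ∈ Finset.range N, E (t n) (t (n + 1)) ≤ TOL ^ 2 := by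
  classical
  -- monotonicity helpers
  have tmono : ∀ i j, i ≤ j → j ≤ N → t i ≤ t j := by
    intro i j hij hjN
    induction hij with
    | refl => exact le_rfl
    | @step m h ih =>
      exact le_trans (ih (Nat.le_of_succ_le hjN))
        (le_of_lt (htmono m (Nat.lt_of_succ_le hjN)))
  have tstrict : ∀ i j, i < j → j ≤ N → t i < t j := by
    intro i j hij hjN
    exact lt_of_lt_of_le (htmono i (lt_of_lt_of_le hij hjN)) (tmono (i + 1) j hij hjN)
  have trefmono : ∀ i j, i ≤ j → j ≤ Nf → tref i ≤ tref j := by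
    intro i j hij hjN
    induction hij with
    | refl => exact le_rfl
    | @step m h ih =>
      exact le_trans (ih (Nat.le_of_succ_le hjN))
        (le_of_lt (htrefmono m (Nat.lt_of_succ_le hjN)))
  have htpos : ∀ n, n ≤ N → 0 ≤ t n := fun n h => ht0 ▸ tmono 0 n (Nat.zero_le _) h
  have htleT : ∀ n, n ≤ N → t n ≤ T := fun n h => htN ▸ tmono n N h le_rfl
  have htrefpos : ∀ m, m ≤ Nf → 0 ≤ tref m :=
    fun m h => htref0 ▸ trefmono 0 m (Nat.zero_le _) h
  have htrefleT : ∀ m, m ≤ Nf → tref m ≤ T := fun m h => htrefN ▸ trefmono m Nf h le_rfl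
  -- key superadditivity lemma for collections of disjoint ordered subintervals
  have key : ∀ (s : Finset ℕ) (a b : ℝ), 0 ≤ a → a < b → b ≤ T →
      (∀ n ∈ s, n < N ∧ a ≤ t n ∧ t (n + 1) ≤ b) →
      ∑ n ∈ s, E (t n) (t (n + 1)) ≤ E a b := by
    intro s
    induction s using Finset.strongInduction with
    | _ s ihs =>
      intro a b ha hab hbT hs
      rcases s.eq_empty_or_nonempty with rfl | hne
      · simpa using hEnonneg a b ha hab hbT
      · set n := s.max' hne with hn
        have hns : n ∈ s := s.max'_mem hne
        obtain ⟨hnN, hatn, htb⟩ := hs n hns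
        have hsub : s.erase n ⊂ s := Finset.erase_ssubset hns
        have herase : ∀ k ∈ s.erase n, k < N ∧ a ≤ t k ∧ t (k + 1) ≤ t n := by
          intro k hk
          have hks := Finset.mem_of_mem_erase hk
          have hkn : k < n := lt_of_le_of_ne (s.le_max' k hks) (Finset.ne_of_mem_erase hk)
          obtain ⟨hkN, hak, _⟩ := hs k hks
          exact ⟨hkN, hak, tmono (k + 1) n hkn hnN.le⟩
        have hsum : ∑ k ∈ s, E (t k) (t (k + 1)) =
            ∑ k ∈ s.erase n, E (t k) (t (k + 1)) + E (t n) (t (n + 1)) := by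
          rw [Finset.sum_erase_add]
          exact hns
        rcases eq_or_lt_of_le hatn with heq | hlt
        · have hempty : s.erase n = ∅ := by
            rw [Finset.eq_empty_iff_forall_notMem]
            intro k hk
            obtain ⟨hkN, hak, hkb⟩ := herase k hk
            have h1 : t k < t (k + 1) := htmono k hkN
            rw [← heq] at hkb
            linarith
          rw [hsum, hempty]
          simp only [Finset.sum_empty, zero_add]
          exact hmono a (t n) (t (n + 1)) b ha hatn (htmono n hnN) htb hbT
        · rw [hsum]
          have htnT : t n ≤ T := le_trans (le_of_lt (htmono n hnN)) (le_trans htb hbT)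
          have h1 := ihs (s.erase n) hsub a (t n) ha hlt htnT herase
          have h2 := hsuper a (t n) (t (n + 1)) ha hlt (htmono n hnN) (le_trans htb hbT)
          have h3 := hmono a a (t (n + 1)) b ha le_rfl
            (lt_of_le_of_lt hatn (htmono n hnN)) htb hbT
          linarith
  -- straddling predicate
  set P : ℕ → Prop := fun n => ∃ m, 0 < m ∧ m < Nf ∧ t n < tref m ∧ tref m < t (n + 1)
    with hP
  -- containment for non-straddling intervals
  have hcont : ∀ n, ∃ m, n < N → ¬ P n →
      m < Nf ∧ tref m ≤ t n ∧ t (n + 1) ≤ tref (m + 1) := by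
    intro n
    by_cases hn : n < N ∧ ¬ P n
    · obtain ⟨hnN, hnP⟩ := hn
      set m := Nat.findGreatest (fun m => tref m ≤ t n) (Nf - 1) with hm
      have h0 : tref 0 ≤ t n := by rw [htref0]; exact htpos n hnN.le
      have hspec : tref m ≤ t n :=
        Nat.findGreatest_spec (P := fun m => tref m ≤ t n) (Nat.zero_le _) h0
      have hmle : m ≤ Nf - 1 := Nat.findGreatest_le _
      have hmNf : m < Nf := lt_of_le_of_lt hmle (Nat.sub_lt hNf one_pos)
      have hlt1 : t n < tref (m + 1) := by
        rcases eq_or_lt_of_le hmle with heq | hlt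
        · have : m + 1 = Nf := by omega
          rw [this, htrefN]
          exact lt_of_lt_of_le (tstrict n N hnN le_rfl) (le_of_eq htN)
        · by_contra hcon
          push_neg at hcon
          exact Nat.findGreatest_is_greatest (P := fun m => tref m ≤ t n) (Nat.lt_succ_self m) hlt hcon
      refine ⟨m, fun _ _ => ⟨hmNf, hspec, ?_⟩⟩
      by_contra hcon
      push_neg at hcon
      have hm1Nf : m + 1 < Nf := by
        rcases lt_or_eq_of_le (Nat.succ_le_of_lt hmNf) with h | h
        · exact h
        · exfalso
          rw [show m + 1 = Nf from h, htrefN] at hcon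
          exact absurd (htleT (n + 1) hnN) (not_le.mpr hcon)
      exact hnP ⟨m + 1, Nat.succ_pos m, hm1Nf, hlt1, hcon⟩
    · exact ⟨0, fun h1 h2 => absurd ⟨h1, h2⟩ hn⟩
  choose g hg using hcont
  -- straddle witness
  have hstr : ∀ n, ∃ m, P n → m < Nf ∧ t n < tref m ∧ tref m < t (n + 1) := by
    intro n
    by_cases hn : P n
    · obtain ⟨m, _, hmNf, h1, h2⟩ := hn
      exact ⟨m, fun _ => ⟨hmNf, h1, h2⟩⟩
    · exact ⟨0, fun h => absurd h hn⟩
  choose g' hg' using hstr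
  set S := (Finset.range N).filter P with hS
  set C := (Finset.range N).filter (fun n => ¬ P n) with hC
  have hsplit : ∑ n ∈ S, E (t n) (t (n + 1)) + ∑ n ∈ C, E (t n) (t (n + 1)) =
      ∑ n ∈ Finset.range N, E (t n) (t (n + 1)) :=
    Finset.sum_filter_add_sum_filter_not _ _ _
  -- bound on the contained part
  have hCmaps : ∀ n ∈ C, g n ∈ Finset.range Nf := by
    intro n hn
    rw [hC, Finset.mem_filter, Finset.mem_range] at hn
    exact Finset.mem_range.mpr (hg n hn.1 hn.2).1
  have hCbound : ∑ n ∈ C, E (t n) (t (n + 1)) ≤ TOL ^ 2 / 2 := by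
    rw [← Finset.sum_fiberwise_of_maps_to hCmaps]
    refine le_trans (Finset.sum_le_sum ?_) href
    intro m hm
    rw [Finset.mem_range] at hm
    refine key _ (tref m) (tref (m + 1)) (htrefpos m hm.le) (htrefmono m hm)
      (htrefleT (m + 1) hm) ?_
    intro n hn
    rw [Finset.mem_filter] at hn
    obtain ⟨hn1, hn2⟩ := hn
    rw [hC, Finset.mem_filter, Finset.mem_range] at hn1
    obtain ⟨hs1, hs2, hs3⟩ := hg n hn1.1 hn1.2
    rw [hn2] at hs2 hs3
    exact ⟨hn1.1, hs2, hs3⟩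
  -- bound on the straddling part
  have hScard : S.card ≤ Nf := by
    have hinj : Set.InjOn g' S := by
      intro n hn n' hn' heq
      rw [hS, Finset.coe_filter, Set.mem_setOf_eq, Finset.mem_range] at hn hn'
      by_contra hne
      rcases Nat.lt_or_ge n n' with h | h
      · obtain ⟨_, h1, h2⟩ := hg' n hn.2
        obtain ⟨_, h1', h2'⟩ := hg' n' hn'.2
        have : t (n + 1) ≤ t n' := tmono (n + 1) n' h hn'.1.le
        rw [heq] at h2
        linarith
      · have h' : n' < n := by omega
        obtain ⟨_, h1, h2⟩ := hg' n hn.2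
        obtain ⟨_, h1', h2'⟩ := hg' n' hn'.2
        have : t (n' + 1) ≤ t n := tmono (n' + 1) n h' hn.1.le
        rw [heq] at h1
        linarith
    have := Finset.card_le_card_of_injOn g' (fun n hn => by
      rw [hS, Finset.mem_coe, Finset.mem_filter] at hn
      exact Finset.mem_coe.mpr (Finset.mem_range.mpr (hg' n hn.2).1)) hinj
    simpa using this
  have hSbound : ∑ n ∈ S, E (t n) (t (n + 1)) ≤ TOL ^ 2 / 2 := by
    have h1 : ∑ n ∈ S, E (t n) (t (n + 1)) ≤ S.card • tol ^ 2 := by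
      refine Finset.sum_le_card_nsmul _ _ _ ?_
      intro n hn
      rw [hS, Finset.mem_filter, Finset.mem_range] at hn
      exact hloc n hn.1
    have h2 : (S.card : ℝ) * tol ^ 2 ≤ (Nf : ℝ) * tol ^ 2 := by
      apply mul_le_mul_of_nonneg_right _ (sq_nonneg tol)
      exact_mod_cast hScard
    have h3 : (Nf : ℝ) * tol ^ 2 ≤ (Nf : ℝ) * (TOL ^ 2 / (2 * Nf)) := by
      apply mul_le_mul_of_nonneg_left htol (Nat.cast_nonneg _)
    have hNf' : (0 : ℝ) < Nf := by exact_mod_cast hNf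
    have h4 : (Nf : ℝ) * (TOL ^ 2 / (2 * Nf)) = TOL ^ 2 / 2 := by
      field_simp
    rw [nsmul_eq_mul] at h1
    linarith
  linarith [hsplit, hCbound, hSbound]
end
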